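/- Let λ1, λ2, λ3, λ4 be distinct positive reals and let X1 = λ1·R1 + λ2·R2 + λ3·R3 + λ4·R4, X2 = λ1·R1 + λ2·R2' + λ3·R3' + λ4·R4' with all R's independent standard exponentials and only R1 shared. If λ1 < max{λ2, λ3, λ4}, then lim_{y→∞} P(X2 > y | X1 > y) = 0. -/

import Mathlib

open MeasureTheory ProbabilityTheory Filter

/-- `R` is a standard exponential random variable under `μ`:
its survival function is `exp (-y)` for `y ≥ 0` and `1` for `y < 0`. -/
def IsStdExp {Ω : Type*} [MeasurableSpace Ω] (μ : Measure Ω) (R : Ω → ℝ) : Prop :=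
  Measurable R ∧ ∀ y : ℝ, μ {ω | y < R ω} = ENNReal.ofReal (Real.exp (-(max y 0)))

open Set Real in
lemma IsStdExp.integrable_exp_mul {Ω : Type*} [MeasurableSpace Ω] {μ : Measure Ω}
    [IsProbabilityMeasure μ] {R : Ω → ℝ} (hR : IsStdExp μ R) {s : ℝ}
    (hs0 : 0 < s) (hs1 : s < 1) : Integrable (fun ω => Real.exp (s * R ω)) μ := by
  refine ⟨((hR.1.const_mul s).exp).aestronglyMeasurable, ?_⟩
  rw [hasFiniteIntegral_iff_ofReal (Eventually.of_forall fun ω => (exp_pos _).le)]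
  rw [lintegral_eq_lintegral_meas_le μ (Eventually.of_forall fun ω => (exp_pos _).le)
    ((hR.1.const_mul s).exp).aemeasurable]
  set θ : ℝ := (s + 1) / 2 with hθ
  have hθ1 : θ < 1 := by rw [hθ]; linarith
  have hθs : s < θ := by rw [hθ]; linarith
  have hθ0 : 0 < θ := by rw [hθ]; linarith
  have hsplit : Ioi (0:ℝ) = Ioc 0 1 ∪ Ioi 1 := (Ioc_union_Ioi_eq_Ioi zero_le_one).symm
  rw [hsplit, lintegral_union measurableSet_Ioi Ioc_disjoint_Ioi_same]
  have h1 : ∫⁻ t in Ioc (0:ℝ) 1, μ {a | t ≤ Real.exp (s * R a)} ≤ 1 := by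
    calc ∫⁻ t in Ioc (0:ℝ) 1, μ {a | t ≤ Real.exp (s * R a)}
        ≤ ∫⁻ _ in Ioc (0:ℝ) 1, 1 := lintegral_mono fun t => prob_le_one
      _ = 1 := by simp
  have h2 : ∫⁻ t in Ioi (1:ℝ), μ {a | t ≤ Real.exp (s * R a)} < ⊤ := by
    have hb : ∀ t ∈ Ioi (1:ℝ), μ {a | t ≤ Real.exp (s * R a)}
        ≤ ENNReal.ofReal (t ^ (-(θ/s))) := by
      intro t ht
      have ht1 : (1:ℝ) < t := ht
      have hlog : 0 < Real.log t := Real.log_pos ht1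
      have hsub : {a | t ≤ Real.exp (s * R a)} ⊆ {a | θ * Real.log t / s < R a} := by
        intro a ha
        have hle : Real.log t ≤ s * R a :=
          (Real.log_le_iff_le_exp (by linarith)).mpr ha
        have : θ * Real.log t < s * R a := by nlinarith
        exact (div_lt_iff₀ hs0).mpr (by linarith [this])
      calc μ {a | t ≤ Real.exp (s * R a)} ≤ μ {a | θ * Real.log t / s < R a} :=
            measure_mono hsub
        _ = ENNReal.ofReal (Real.exp (-(max (θ * Real.log t / s) 0))) := hR.2 _
        _ = ENNReal.ofReal (t ^ (-(θ/s))) := by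
            have hpos : 0 ≤ θ * Real.log t / s := by positivity
            rw [max_eq_left hpos, Real.rpow_def_of_pos (by linarith : (0:ℝ) < t)]
            congr 1
            ring
    have hfin : (∫⁻ t in Ioi (1:ℝ), (‖(t ^ (-(θ/s)) : ℝ)‖₊ : ENNReal)) < ⊤ := by
      have hint : IntegrableOn (fun t : ℝ => t ^ (-(θ/s))) (Ioi 1) := by
        refine integrableOn_Ioi_rpow_of_lt ?_ zero_lt_one
        rw [neg_lt, neg_neg, lt_div_iff₀ hs0]
        linarith
      exact hint.hasFiniteIntegral
    calc ∫⁻ t in Ioi (1:ℝ), μ {a | t ≤ Real.exp (s * R a)}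
        ≤ ∫⁻ t in Ioi (1:ℝ), ENNReal.ofReal (t ^ (-(θ/s))) :=
          setLIntegral_mono' measurableSet_Ioi hb
      _ ≤ ∫⁻ t in Ioi (1:ℝ), (‖(t ^ (-(θ/s)) : ℝ)‖₊ : ENNReal) :=
          lintegral_mono fun t => Real.ofReal_le_enorm _
      _ < ⊤ := hfin
  exact ENNReal.add_lt_top.mpr ⟨lt_of_le_of_lt h1 ENNReal.one_lt_top, h2⟩

/-- X1, X2 share only R1 (index 0). If λ1 is not dominant, the pair is
asymptotically independent. -/
theorem stmt_9 {Ω : Type*} [MeasurableSpace Ω] (μ : Measure Ω) [IsProbabilityMeasure μ]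
    (R : Fin 7 → Ω → ℝ) (hR : ∀ i, IsStdExp μ (R i))
    (hind : iIndepFun R μ)
    (l1 l2 l3 l4 : ℝ) (hpos : 0 < l1 ∧ 0 < l2 ∧ 0 < l3 ∧ 0 < l4)
    (hdist : l1 ≠ l2 ∧ l1 ≠ l3 ∧ l1 ≠ l4 ∧ l2 ≠ l3 ∧ l2 ≠ l4 ∧ l3 ≠ l4)
    (X1 X2 : Ω → ℝ)
    (hX1 : ∀ ω, X1 ω = l1 * R 0 ω + l2 * R 1 ω + l3 * R 2 ω + l4 * R 3 ω)
    (hX2 : ∀ ω, X2 ω = l1 * R 0 ω + l2 * R 4 ω + l3 * R 5 ω + l4 * R 6 ω)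
    (hdom : l1 < max (max l2 l3) l4) :
    Tendsto (fun y : ℝ =>
        (μ {ω | y < X1 ω ∧ y < X2 ω}).toReal / (μ {ω | y < X1 ω}).toReal)
      atTop (nhds 0) := by
  obtain ⟨h1, h2, h3, h4⟩ := hpos
  set m := max (max l2 l3) l4 with hm
  have hm2 : l2 ≤ m := le_max_of_le_left (le_max_left _ _)
  have hm3 : l3 ≤ m := le_max_of_le_left (le_max_right _ _)
  have hm4 : l4 ≤ m := le_max_right _ _
  have hm0 : 0 < m := lt_of_lt_of_le h2 hm2
  set M := max m (2*l1) with hM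
  have hmM : m ≤ M := le_max_left _ _
  have h2l1 : 2*l1 ≤ M := le_max_right _ _
  have hM2m : M < 2*m := max_lt (by linarith) (by linarith)
  have hM0 : 0 < M := lt_of_lt_of_le hm0 hmM
  have hden : 0 < M + 2*m := by linarith
  set t := 2 / (M + 2*m) with ht
  have ht0 : 0 < t := by rw [ht]; exact div_pos two_pos hden
  have htM : t * M < 1 := by
    rw [ht, div_mul_eq_mul_div, div_lt_one hden]; linarith
  have htm : 1/m < 2*t := by
    have h4m : (1:ℝ)/m < 4/(M+2*m) := by
      rw [div_lt_div_iff₀ hm0 hden]; linarith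
    have : 2*t = 4/(M+2*m) := by rw [ht]; ring
    linarith [this ▸ h4m]
  set c : Fin 7 → ℝ := ![2*l1, l2, l3, l4, l2, l3, l4] with hc
  have hc0 : c 0 = 2*l1 := rfl
  have hc1 : c 1 = l2 := rfl
  have hc2 : c 2 = l3 := rfl
  have hc3 : c 3 = l4 := rfl
  have hc4 : c 4 = l2 := rfl
  have hc5 : c 5 = l3 := rfl
  have hc6 : c 6 = l4 := rfl
  have hc_pos : ∀ i, 0 < c i := by
    intro i
    fin_cases i
    · show (0:ℝ) < 2 * l1; linarith
    · show (0:ℝ) < l2; linarith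
    · show (0:ℝ) < l3; linarith
    · show (0:ℝ) < l4; linarith
    · show (0:ℝ) < l2; linarith
    · show (0:ℝ) < l3; linarith
    · show (0:ℝ) < l4; linarith
  have hc_le : ∀ i, c i ≤ M := by
    intro i
    fin_cases i
    · show 2 * l1 ≤ M; linarith
    · show l2 ≤ M; linarith
    · show l3 ≤ M; linarith
    · show l4 ≤ M; linarith
    · show l2 ≤ M; linarith
    · show l3 ≤ M; linarith
    · show l4 ≤ M; linarith
  set Z : Fin 7 → Ω → ℝ := fun i ω => c i * R i ω with hZ
  have hZmeas : ∀ i, Measurable (Z i) := fun i => ((hR i).1.const_mul _)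
  have hZindep : iIndepFun Z μ :=
    hind.comp (fun i x => c i * x) (fun i => measurable_const_mul _)
  have hZint : ∀ i ∈ Finset.univ, Integrable (fun ω => Real.exp (t * Z i ω)) μ := by
    intro i _
    have heq : (fun ω => Real.exp (t * Z i ω))
        = (fun ω => Real.exp ((t * c i) * R i ω)) := by
      funext ω; rw [hZ]; ring_nf
    rw [heq]
    refine (hR i).integrable_exp_mul (mul_pos ht0 (hc_pos i)) ?_
    calc t * c i ≤ t * M := by nlinarith [hc_le i]
      _ < 1 := htM
  set S : Ω → ℝ := ∑ i, Z i with hS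
  have hSint : Integrable (fun ω => Real.exp (t * S ω)) μ :=
    hZindep.integrable_exp_mul_sum hZmeas hZint
  have hSval : ∀ ω, S ω = X1 ω + X2 ω := by
    intro ω
    have hZapp : ∀ i ω', Z i ω' = c i * R i ω' := fun _ _ => rfl
    simp only [hS, Finset.sum_apply, Fin.sum_univ_seven, Pi.add_apply, hZapp,
      hc0, hc1, hc2, hc3, hc4, hc5, hc6, hX1 ω, hX2 ω]
    ring
  set C := mgf S μ t with hC
  have hC0 : 0 ≤ C := mgf_nonneg
  -- a.e. nonnegativity
  have hae : ∀ᵐ ω ∂μ, ∀ i, 0 ≤ R i ω := by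
    rw [ae_all_iff]
    intro i
    have hnull : ∀ y : ℝ, y < 0 → μ {ω | R i ω ≤ y} = 0 := by
      intro y hy
      have hms : MeasurableSet {ω | y < R i ω} :=
        measurableSet_lt measurable_const (hR i).1
      have hone : μ {ω | y < R i ω} = 1 := by
        rw [(hR i).2 y, max_eq_right hy.le]; simp
      have hcomp : {ω | R i ω ≤ y} = {ω | y < R i ω}ᶜ := by
        ext ω; simp [not_lt]
      rw [hcomp, measure_compl hms (measure_ne_top _ _), hone, measure_univ]
      simp
    have hsub : {ω | ¬ 0 ≤ R i ω} ⊆ ⋃ n : ℕ, {ω | R i ω ≤ -((n:ℝ)+1)⁻¹} := by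
      intro ω hω
      rw [Set.mem_setOf_eq, not_le] at hω
      obtain ⟨n, hn⟩ := exists_nat_one_div_lt (neg_pos.mpr hω)
      refine Set.mem_iUnion.mpr ⟨n, ?_⟩
      rw [one_div] at hn
      simp only [Set.mem_setOf_eq]
      linarith
    rw [ae_iff]
    refine measure_mono_null hsub (measure_iUnion_null fun n => hnull _ ?_)
    have : (0:ℝ) < ((n:ℝ)+1)⁻¹ := by positivity
    linarith
  -- dominant index
  have hj : ∃ j : Fin 7, ∀ ω, (∀ i, 0 ≤ R i ω) → m * R j ω ≤ X1 ω := by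
    have key : m = l2 ∨ m = l3 ∨ m = l4 := by
      rw [hm]
      rcases max_cases (max l2 l3) l4 with ⟨h, _⟩ | ⟨h, _⟩
      · rw [h]
        rcases max_cases l2 l3 with ⟨h', _⟩ | ⟨h', _⟩
        · exact Or.inl h'
        · exact Or.inr (Or.inl h')
      · exact Or.inr (Or.inr h)
    rcases key with h | h | h
    · exact ⟨1, fun ω hnn => by
        rw [hX1 ω, h]
        linarith [mul_nonneg h1.le (hnn 0), mul_nonneg h3.le (hnn 2),
          mul_nonneg h4.le (hnn 3)]⟩
    · exact ⟨2, fun ω hnn => by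
        rw [hX1 ω, h]
        linarith [mul_nonneg h1.le (hnn 0), mul_nonneg h2.le (hnn 1),
          mul_nonneg h4.le (hnn 3)]⟩
    · exact ⟨3, fun ω hnn => by
        rw [hX1 ω, h]
        linarith [mul_nonneg h1.le (hnn 0), mul_nonneg h2.le (hnn 1),
          mul_nonneg h3.le (hnn 2)]⟩
  obtain ⟨j, hjle⟩ := hj
  -- lower bound on the denominator
  have hden_lb : ∀ y : ℝ, 0 ≤ y →
      ENNReal.ofReal (Real.exp (-(y/m))) ≤ μ {ω | y < X1 ω} := by
    intro y hy
    have hsub : ∀ᵐ ω ∂μ, ω ∈ {ω | y/m < R j ω} → ω ∈ {ω | y < X1 ω} := by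
      filter_upwards [hae] with ω hnn hmem
      have hlt : y < m * R j ω := by
        have := (div_lt_iff₀ hm0).mp hmem
        linarith
      exact lt_of_lt_of_le hlt (hjle ω hnn)
    calc ENNReal.ofReal (Real.exp (-(y/m))) = μ {ω | y/m < R j ω} := by
          rw [(hR j).2 (y/m), max_eq_left (div_nonneg hy hm0.le)]
      _ ≤ μ {ω | y < X1 ω} := measure_mono_ae hsub
  -- Chernoff bound on the numerator
  have hnum : ∀ y : ℝ, (μ {ω | y < X1 ω ∧ y < X2 ω}).toReal
      ≤ Real.exp (-t*(2*y)) * C := by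
    intro y
    have hsub : {ω | y < X1 ω ∧ y < X2 ω} ⊆ {ω | 2*y ≤ S ω} := by
      rintro ω ⟨ha, hb⟩
      rw [Set.mem_setOf_eq, hSval ω]
      linarith
    calc (μ {ω | y < X1 ω ∧ y < X2 ω}).toReal
        ≤ (μ {ω | 2*y ≤ S ω}).toReal :=
          ENNReal.toReal_mono (measure_ne_top _ _) (measure_mono hsub)
      _ ≤ Real.exp (-t*(2*y)) * C := measure_ge_le_exp_mul_mgf (2*y) ht0.le hSint
  -- squeeze
  refine squeeze_zero' (g := fun y => C * Real.exp ((1/m - 2*t)*y))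
    (Eventually.of_forall fun y => div_nonneg ENNReal.toReal_nonneg ENNReal.toReal_nonneg)
    ?_ ?_
  · filter_upwards [eventually_ge_atTop (0:ℝ)] with y hy
    have hdenR : Real.exp (-(y/m)) ≤ (μ {ω | y < X1 ω}).toReal := by
      calc Real.exp (-(y/m))
          = (ENNReal.ofReal (Real.exp (-(y/m)))).toReal :=
            (ENNReal.toReal_ofReal (Real.exp_pos _).le).symm
        _ ≤ (μ {ω | y < X1 ω}).toReal :=
            ENNReal.toReal_mono (measure_ne_top _ _) (hden_lb y hy)
    calc (μ {ω | y < X1 ω ∧ y < X2 ω}).toReal / (μ {ω | y < X1 ω}).toReal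
        ≤ (Real.exp (-t*(2*y)) * C) / Real.exp (-(y/m)) :=
          div_le_div₀ (mul_nonneg (Real.exp_pos _).le hC0) (hnum y) (Real.exp_pos _) hdenR
      _ = C * Real.exp ((1/m - 2*t)*y) := by
          rw [mul_comm (Real.exp (-t*(2*y))) C, mul_div_assoc, ← Real.exp_sub]
          congr 1
          field_simp
          ring
  · have hcoef : 1/m - 2*t < 0 := by linarith
    have hlin : Tendsto (fun y : ℝ => (1/m - 2*t)*y) atTop atBot :=
      tendsto_id.const_mul_atTop_of_neg hcoef
    have h0 : Tendsto (fun y : ℝ => Real.exp ((1/m - 2*t)*y)) atTop (nhds 0) :=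
      Real.tendsto_exp_atBot.comp hlin
    simpa using h0.const_mul C
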